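/- Let w : ℝ → ℝ be a nonnegative, square-integrable function that is even (w(−x) = w(x) for all x) and nonincreasing on [0, ∞). Then the autocorrelation function τ(t) = ∫_ℝ w(x) w(x − t) dx satisfies: (i) τ(t) ≥ 0 for all t; (ii) τ(−t) = τ(t) for all t; (iii) τ is nonincreasing on [0, ∞). If moreover w is strictly decreasing on [0, ∞), then τ is strictly decreasing on [0, ∞). -/

import Mathlib

open MeasureTheory

/-- Lemma 1 (Monotone property): the autocorrelation
`τ(t) = ∫ w(x) w(x − t) dx` of a nonnegative, square-integrable, even function `w`
that is nonincreasing on `[0,∞)` is nonnegative, even, and nonincreasing on `[0,∞)`;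
it is strictly decreasing on `[0,∞)` if `w` is strictly decreasing on `[0,∞)`. -/
theorem autocorrelation_monotone
    (w : ℝ → ℝ)
    (hw_nonneg : ∀ x, 0 ≤ w x)
    (hw_L2 : MemLp w 2 (volume : Measure ℝ))
    (hw_even : ∀ x, w (-x) = w x)
    (hw_anti : AntitoneOn w (Set.Ici (0 : ℝ)))
    (τ : ℝ → ℝ)
    (hτ : ∀ t, τ t = ∫ x : ℝ, w x * w (x - t)) :
    (∀ t, 0 ≤ τ t) ∧
    (∀ t, τ (-t) = τ t) ∧
    AntitoneOn τ (Set.Ici (0 : ℝ)) ∧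
    (StrictAntiOn w (Set.Ici (0 : ℝ)) → StrictAntiOn τ (Set.Ici (0 : ℝ))) := by
  have habs : ∀ x, w |x| = w x := by
    intro x
    rcases abs_cases x with ⟨h, _⟩ | ⟨h, _⟩
    · rw [h]
    · rw [h, hw_even]
  have hmono : ∀ a b : ℝ, |a| ≤ |b| → w b ≤ w a := by
    intro a b h
    rw [← habs a, ← habs b]
    exact hw_anti (abs_nonneg a) (abs_nonneg b) h
  -- integrability of the products
  have hshift : ∀ t : ℝ, MemLp (fun x => w (x - t)) 2 (volume : Measure ℝ) := fun t =>
    hw_L2.comp_measurePreserving (measurePreserving_sub_right volume t)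
  have hInt : ∀ t : ℝ, Integrable (fun x => w x * w (x - t)) (volume : Measure ℝ) := by
    intro t
    have h1 : MemLp (w • fun x => w (x - t)) 1 (volume : Measure ℝ) :=
      (hshift t).smul hw_L2 (hpqr := ⟨by simp [ENNReal.inv_two_add_inv_two]⟩)
    have h2 := memLp_one_iff_integrable.mp h1
    exact h2
  -- the key identity and integrability of the folded integrand
  have main : ∀ s t : ℝ,
      Integrable (fun x => (w x - w (s + t - x)) * (w (x - s) - w (x - t)))
        (volume : Measure ℝ) ∧
      τ s - τ t =
        ∫ x in Set.Iic ((s + t) / 2),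
          (w x - w (s + t - x)) * (w (x - s) - w (x - t)) := by
    intro s t
    set c : ℝ := s + t with hc
    set m : ℝ := c / 2 with hm
    set d : ℝ → ℝ := fun x => w x * w (x - s) - w x * w (x - t) with hd_def
    have hd : Integrable d (volume : Measure ℝ) := (hInt s).sub (hInt t)
    have hcomp : Integrable (fun x => d (c - x)) (volume : Measure ℝ) := by
      have := ((Measure.measurePreserving_sub_left (volume : Measure ℝ) c).integrable_comp
        hd.aestronglyMeasurable).mpr hd
      exact this
    -- pointwise identity
    have hpt : ∀ x, d x + d (c - x)
        = (w x - w (c - x)) * (w (x - s) - w (x - t)) := by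
      intro x
      have e1 : w (c - x - s) = w (x - t) := by
        rw [show c - x - s = -(x - t) by rw [hc]; ring, hw_even]
      have e2 : w (c - x - t) = w (x - s) := by
        rw [show c - x - t = -(x - s) by rw [hc]; ring, hw_even]
      simp only [hd_def, e1, e2]
      ring
    have hG : Integrable (fun x => (w x - w (c - x)) * (w (x - s) - w (x - t)))
        (volume : Measure ℝ) := by
      have := hd.add hcomp
      refine this.congr ?_
      exact Filter.Eventually.of_forall fun x => (hpt x)
    refine ⟨hG, ?_⟩
    -- split the integral
    have hτst : τ s - τ t = ∫ x : ℝ, d x := by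
      rw [hτ s, hτ t, ← integral_sub (hInt s) (hInt t)]
    have hsplit : (∫ x in Set.Iic m, d x) + ∫ x in Set.Ioi m, d x = ∫ x : ℝ, d x := by
      have := integral_add_compl (μ := (volume : Measure ℝ)) (measurableSet_Iic (a := m)) hd
      rwa [Set.compl_Iic] at this
    -- reflection of the upper half
    have hrefl : ∫ x in Set.Ioi m, d x = ∫ x in Set.Iic m, d (c - x) := by
      have A : MeasurableEmbedding (fun x : ℝ => c - x) :=
        (MeasurableEquiv.subLeft c).measurableEmbedding
      have B := A.setIntegral_map (μ := (volume : Measure ℝ)) d (Set.Ioi m)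
      rw [Measure.map_sub_left_eq_self (volume : Measure ℝ) c] at B
      have hpre : (fun x : ℝ => c - x) ⁻¹' Set.Ioi m = Set.Iio m := by
        ext x
        simp only [Set.mem_preimage, Set.mem_Ioi, Set.mem_Iio]
        constructor <;> intro h <;> [skip; skip] <;>
          · have : c = 2 * m := by rw [hm]; ring
            linarith
      rw [hpre] at B
      rw [B]
      exact setIntegral_congr_set Iio_ae_eq_Iic
    have hadd : (∫ x in Set.Iic m, d x) + ∫ x in Set.Iic m, d (c - x)
        = ∫ x in Set.Iic m, (w x - w (c - x)) * (w (x - s) - w (x - t)) := by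
      rw [← integral_add hd.integrableOn hcomp.integrableOn]
      exact setIntegral_congr_fun measurableSet_Iic fun x _ => hpt x
    calc τ s - τ t = ∫ x : ℝ, d x := hτst
      _ = (∫ x in Set.Iic m, d x) + ∫ x in Set.Ioi m, d x := hsplit.symm
      _ = (∫ x in Set.Iic m, d x) + ∫ x in Set.Iic m, d (c - x) := by rw [hrefl]
      _ = _ := hadd
  -- nonnegativity of the factors on `Iic m`
  have hfac : ∀ s t x : ℝ, 0 ≤ s → s ≤ t → x ≤ (s + t) / 2 →
      w (s + t - x) ≤ w x ∧ w (x - t) ≤ w (x - s) := by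
    intro s t x hs hst hx
    constructor
    · refine hmono x (s + t - x) ?_
      have h1 : |x| ≤ s + t - x := abs_le.mpr ⟨by linarith, by linarith⟩
      exact h1.trans (le_abs_self _)
    · refine hmono (x - s) (x - t) ?_
      have h1 : |x - s| ≤ t - x := abs_le.mpr ⟨by linarith, by linarith⟩
      refine h1.trans ?_
      rw [abs_sub_comm]
      exact le_abs_self _
  refine ⟨?_, ?_, ?_, ?_⟩
  · -- nonnegativity
    intro t
    rw [hτ t]
    exact integral_nonneg fun x => mul_nonneg (hw_nonneg x) (hw_nonneg _)
  · -- evenness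
    intro t
    have h := MeasureTheory.integral_sub_right_eq_self (μ := (volume : Measure ℝ))
      (fun x => w x * w (x + t)) t
    simp only [sub_add_cancel] at h
    -- h : ∫ x, w (x - t) * w x = ∫ x, w x * w (x + t)
    rw [hτ, hτ]
    simp only [sub_neg_eq_add]
    rw [← h]
    exact integral_congr_ae (Filter.Eventually.of_forall fun x => mul_comm _ _)
  · -- antitone
    intro s hs t ht hst
    have ⟨hG, hkey⟩ := main s t
    have : 0 ≤ τ s - τ t := by
      rw [hkey]
      refine setIntegral_nonneg measurableSet_Iic fun x hx => ?_
      obtain ⟨h1, h2⟩ := hfac s t x hs hst hx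
      exact mul_nonneg (by linarith) (by linarith)
    linarith
  · -- strict antitone
    intro hstrict s hs t ht hst
    have hsmono : ∀ a b : ℝ, |a| < |b| → w b < w a := by
      intro a b h
      rw [← habs a, ← habs b]
      exact hstrict (abs_nonneg a) (abs_nonneg b) h
    have ⟨hG, hkey⟩ := main s t
    have hs' : (0 : ℝ) ≤ s := hs
    have hst' : s < t := hst
    set m : ℝ := (s + t) / 2 with hm
    have hpos : ∀ x : ℝ, x < m →
        0 < (w x - w (s + t - x)) * (w (x - s) - w (x - t)) := by
      intro x hx
      have h1 : w (s + t - x) < w x := by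
        refine hsmono x (s + t - x) ?_
        have h1' : |x| < s + t - x := abs_lt.mpr ⟨by linarith, by linarith⟩
        exact h1'.trans_le (le_abs_self _)
      have h2 : w (x - t) < w (x - s) := by
        refine hsmono (x - s) (x - t) ?_
        have h2' : |x - s| < t - x := abs_lt.mpr ⟨by linarith, by linarith⟩
        refine h2'.trans_le ?_
        rw [abs_sub_comm]
        exact le_abs_self _
      exact mul_pos (by linarith) (by linarith)
    have hpos' : 0 < ∫ x in Set.Iic m,
        (w x - w (s + t - x)) * (w (x - s) - w (x - t)) := by
      rw [setIntegral_pos_iff_support_of_nonneg_ae ?_ hG.integrableOn]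
      · refine lt_of_lt_of_le ?_ (measure_mono (?_ :
          Set.Iio m ⊆ Function.support
            (fun x => (w x - w (s + t - x)) * (w (x - s) - w (x - t))) ∩ Set.Iic m))
        · rw [Real.volume_Iio]
          exact ENNReal.zero_lt_top
        · intro x hx
          exact ⟨ne_of_gt (hpos x hx), Set.mem_Iic.mpr (le_of_lt (Set.mem_Iio.mp hx))⟩
      · refine (ae_restrict_iff' measurableSet_Iic).mpr ?_
        refine Filter.Eventually.of_forall fun x hx => ?_
        obtain ⟨h1, h2⟩ := hfac s t x hs (le_of_lt hst) hx
        exact mul_nonneg (by linarith) (by linarith)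
    linarith [hkey ▸ hpos']
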